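/- arXiv:1105.1190 — 4 statements merged into one kernel-verified Lean document; each statement's English description precedes it below -/
import Mathlib

section
/- Let ū ∈ L²_c(Σ) with ū_z < 0 almost everywhere on Σ. Then the function R ↦ ‖T_R ū − ū‖²_{L²_c(Σ)} restricted to a compact set satisfies: for every compact set Σ₀ ⋐ Σ there exists C₁ > 0 such that ‖T_R ū − ū‖_{L²_c(Σ)} ≥ C₁ |R| for all |R| ≤ 1, provided |ū_z| is bounded away from zero on a neighborhood of Σ₀. -/
open MeasureTheory Real Set

lemma mvt_bound (g g' : ℝ → ℝ) (hd : ∀ z, HasDerivAt g (g' z) z) (z m : ℝ)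
    (hm : 0 < m) (hlow : ∀ r : ℝ, |r| ≤ 1 → g' (z - r) ≤ -m)
    (R : ℝ) (hR0 : R ≠ 0) (hR1 : |R| ≤ 1) :
    m * |R| ≤ |g (z - R) - g z| := by
  have hc : Continuous g := by
    exact continuous_iff_continuousAt.mpr fun x => (hd x).continuousAt
  rcases lt_or_gt_of_ne hR0 with hRneg | hRpos
  · have hab : z < z - R := by linarith
    obtain ⟨ξ, hξ, hslope⟩ := exists_hasDerivAt_eq_slope g g' hab (hc.continuousOn)
      (fun x _ => hd x)
    have hξ1 : ξ = z - (z - ξ) := by ring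
    have habs : |z - ξ| ≤ 1 := by
      rw [abs_le]; rw [abs_le] at hR1
      constructor <;> [linarith [hξ.2]; linarith [hξ.1]]
    have hle := hlow (z - ξ) habs
    rw [← hξ1, hslope] at hle
    have hden : (0:ℝ) < z - R - z := by linarith
    rw [div_le_iff₀ hden] at hle
    have h2 : g (z - R) - g z ≤ m * R := by nlinarith
    calc m * |R| = -(m * R) := by rw [abs_of_neg hRneg]; ring
      _ ≤ -(g (z - R) - g z) := by linarith
      _ ≤ |g (z - R) - g z| := neg_le_abs _
  · have hab : z - R < z := by linarith
    obtain ⟨ξ, hξ, hslope⟩ := exists_hasDerivAt_eq_slope g g' hab (hc.continuousOn)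
      (fun x _ => hd x)
    have hξ1 : ξ = z - (z - ξ) := by ring
    have habs : |z - ξ| ≤ 1 := by
      rw [abs_le]; rw [abs_le] at hR1
      constructor <;> [linarith [hξ.2]; linarith [hξ.1]]
    have hle := hlow (z - ξ) habs
    rw [← hξ1, hslope] at hle
    have hden : (0:ℝ) < z - (z - R) := by linarith
    rw [div_le_iff₀ hden] at hle
    have h2 : m * R ≤ g (z - R) - g z := by nlinarith
    calc m * |R| = m * R := by rw [abs_of_pos hRpos]
      _ ≤ g (z - R) - g z := h2
      _ ≤ |g (z - R) - g z| := le_abs_self _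

/-- If `ū_z < 0` and `|ū_z(y, z − r)| ≥ m > 0` on a compact piece
`S₀` of the cylinder (of positive finite measure, with bounded z-coordinates),
then there is `C₁ > 0` with `‖T_R ū − ū‖_{L²_c} ≥ C₁ |R|` for all `|R| ≤ 1`. -/
theorem stmt_2 {Ω : Type*} [MeasurableSpace Ω] (μ : Measure Ω) [SigmaFinite μ]
    (c : ℝ) (hc : 0 < c) (ubar ubarz : Ω × ℝ → ℝ)
    (hubar : Measurable ubar) (hubarz : Measurable ubarz)
    (hderiv : ∀ y z, HasDerivAt (fun z' => ubar (y, z')) (ubarz (y, z)) z)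
    (hneg : ∀ p : Ω × ℝ, ubarz p < 0)
    (S₀ : Set (Ω × ℝ)) (hS₀ : MeasurableSet S₀)
    (hpos : 0 < (μ.prod (volume : Measure ℝ)) S₀)
    (hfin : (μ.prod (volume : Measure ℝ)) S₀ < ⊤)
    (a b : ℝ) (hab : ∀ p ∈ S₀, a ≤ p.2 ∧ p.2 ≤ b)
    (m : ℝ) (hm : 0 < m)
    (hlow : ∀ p ∈ S₀, ∀ r : ℝ, |r| ≤ 1 → ubarz (p.1, p.2 - r) ≤ -m)
    (hInt : ∀ R : ℝ, Integrable
      (fun p : Ω × ℝ => Real.exp (c * p.2) * (ubar (p.1, p.2 - R) - ubar p)^2)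
      (μ.prod (volume : Measure ℝ))) :
    ∃ C₁ > 0, ∀ R : ℝ, |R| ≤ 1 →
      C₁ * |R| ≤
        Real.sqrt (∫ p : Ω × ℝ, Real.exp (c * p.2) * (ubar (p.1, p.2 - R) - ubar p)^2
          ∂(μ.prod (volume : Measure ℝ))) := by
  set ν := μ.prod (volume : Measure ℝ) with hν
  set M := (ν S₀).toReal with hM
  have hMpos : 0 < M := ENNReal.toReal_pos hpos.ne' hfin.ne
  refine ⟨m * Real.exp (c * a / 2) * Real.sqrt M, by positivity, fun R hR1 => ?_⟩
  -- pointwise lower bound on S₀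
  have key : ∀ p ∈ S₀,
      Real.exp (c * a) * (m^2 * R^2) ≤ Real.exp (c * p.2) * (ubar (p.1, p.2 - R) - ubar p)^2 := by
    intro p hp
    rcases eq_or_ne R 0 with rfl | hR0
    · have : (0:ℝ) ≤ Real.exp (c * p.2) * (ubar (p.1, p.2 - 0) - ubar p)^2 := by positivity
      simpa using this
    · have hmvt := mvt_bound (fun z' => ubar (p.1, z')) (fun z' => ubarz (p.1, z'))
        (fun z => hderiv p.1 z) p.2 m hm (fun r hr => hlow p hp r hr) R hR0 hR1
      have hsq : m^2 * R^2 ≤ (ubar (p.1, p.2 - R) - ubar p)^2 := by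
        have h0 : 0 ≤ m * |R| := by positivity
        have h := pow_le_pow_left₀ h0 hmvt 2
        simp only [mul_pow, sq_abs] at h
        exact h
      have hexp : Real.exp (c * a) ≤ Real.exp (c * p.2) :=
        Real.exp_le_exp.mpr (by nlinarith [(hab p hp).1])
      calc Real.exp (c * a) * (m^2 * R^2)
          ≤ Real.exp (c * p.2) * (m^2 * R^2) := by
            apply mul_le_mul_of_nonneg_right hexp; positivity
        _ ≤ Real.exp (c * p.2) * (ubar (p.1, p.2 - R) - ubar p)^2 := by
            apply mul_le_mul_of_nonneg_left hsq (Real.exp_pos _).le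
  have hIntR := hInt R
  have hnn : 0 ≤ᵐ[ν] fun p : Ω × ℝ => Real.exp (c * p.2) * (ubar (p.1, p.2 - R) - ubar p)^2 := by
    filter_upwards with p; positivity
  have hset : Real.exp (c * a) * (m^2 * R^2) * M ≤
      ∫ p in S₀, Real.exp (c * p.2) * (ubar (p.1, p.2 - R) - ubar p)^2 ∂ν :=
    setIntegral_ge_of_const_le_real hS₀ hfin.ne key hIntR.integrableOn
  have hmono : ∫ p in S₀, Real.exp (c * p.2) * (ubar (p.1, p.2 - R) - ubar p)^2 ∂ν ≤
      ∫ p, Real.exp (c * p.2) * (ubar (p.1, p.2 - R) - ubar p)^2 ∂ν :=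
    setIntegral_le_integral hIntR hnn
  have hI : Real.exp (c * a) * (m^2 * R^2) * M ≤
      ∫ p, Real.exp (c * p.2) * (ubar (p.1, p.2 - R) - ubar p)^2 ∂ν := le_trans hset hmono
  have he : Real.exp (c * a / 2) ^ 2 = Real.exp (c * a) := by
    rw [sq, ← Real.exp_add]; ring_nf
  rw [show (Real.exp (c * a) * (m^2 * R^2) * M)
      = (m * Real.exp (c * a / 2) * Real.sqrt M * |R|)^2 by
    rw [mul_pow, mul_pow, mul_pow, sq_abs, Real.sq_sqrt hMpos.le, he]; ring] at hI
  have h0 : 0 ≤ m * Real.exp (c * a / 2) * Real.sqrt M * |R| := by positivity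
  calc m * Real.exp (c * a / 2) * Real.sqrt M * |R|
      = Real.sqrt ((m * Real.exp (c * a / 2) * Real.sqrt M * |R|)^2) :=
        (Real.sqrt_sq h0).symm
    _ ≤ _ := Real.sqrt_le_sqrt hI
end

section
/- Let ψ ∈ H¹_c(Σ) (weight e^{cz}) on Σ = Ω × ℝ, vanishing appropriately on ∂Ω_±, and let ν₀ be the principal eigenvalue of −Δ_y − f_u(0,y) on Ω. Then ∫_Σ e^{cz}(|∇w|² − f_u(0,y) w²) dx ≥ (c²/4 + ν₀) ∫_Σ e^{cz} w² dx for all w ∈ H¹_c(Σ). -/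
open MeasureTheory Real Set

lemma hardy1d (c : ℝ) (hc : 0 < c) (f f' : ℝ → ℝ) (hf' : Measurable f')
    (hd : ∀ z, HasDerivAt f (f' z) z)
    (hint : Integrable (fun z => Real.exp (c * z) * ((f z)^2 + (f' z)^2))) :
    c^2/4 * ∫ z, Real.exp (c * z) * (f z)^2 ≤ ∫ z, Real.exp (c * z) * (f' z)^2 := by
  have hfc : Continuous f := by
    rw [continuous_iff_continuousAt]; exact fun z => (hd z).continuousAt
  have hfm : AEStronglyMeasurable f (volume : Measure ℝ) := hfc.aestronglyMeasurable
  have hexp : Continuous fun z : ℝ => Real.exp (c * z) :=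
    Real.continuous_exp.comp (continuous_const.mul continuous_id)
  have I1 : Integrable (fun z => Real.exp (c * z) * (f z)^2) := by
    refine hint.mono' ((hexp.mul (hfc.pow 2)).aestronglyMeasurable) ?_
    filter_upwards with z
    rw [Real.norm_eq_abs, abs_of_nonneg (by positivity)]
    nlinarith [Real.exp_pos (c * z), sq_nonneg (f' z)]
  have I2 : Integrable (fun z => Real.exp (c * z) * (f' z)^2) := by
    refine hint.mono' ((hexp.aemeasurable.mul ((hf'.pow_const 2).aemeasurable)).aestronglyMeasurable) ?_
    filter_upwards with z
    rw [Real.norm_eq_abs, abs_of_nonneg (by positivity)]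
    nlinarith [Real.exp_pos (c * z), sq_nonneg (f z)]
  have I3 : Integrable (fun z => Real.exp (c * z) * (f z * f' z)) := by
    refine hint.mono' ((hexp.aemeasurable.mul (hfc.measurable.aemeasurable.mul hf'.aemeasurable)).aestronglyMeasurable) ?_
    filter_upwards with z
    rw [Real.norm_eq_abs, abs_mul, abs_of_nonneg (Real.exp_pos _).le]
    have : |f z * f' z| ≤ (f z)^2 + (f' z)^2 := by
      cases abs_cases (f z * f' z) with
      | inl h => nlinarith [sq_nonneg (f z - f' z)]
      | inr h => nlinarith [sq_nonneg (f z + f' z)]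
    nlinarith [Real.exp_pos (c * z)]
  -- F = e^{cz} f², F' = c F + 2 e^{cz} f f'
  have hF : ∀ z, HasDerivAt (fun z => Real.exp (c * z) * (f z)^2)
      (c * (Real.exp (c * z) * (f z)^2) + 2 * (Real.exp (c * z) * (f z * f' z))) z := by
    intro z
    have h1 : HasDerivAt (fun z : ℝ => Real.exp (c * z)) (Real.exp (c * z) * c) z := by
      simpa using (((hasDerivAt_id z).const_mul c).exp)
    have h2 : HasDerivAt (fun z => (f z)^2) (2 * f z ^ 1 * f' z) z := (hd z).pow 2
    have := h1.fun_mul h2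
    exact this.congr_deriv (by ring)
  have IF' : Integrable (fun z => c * (Real.exp (c * z) * (f z)^2)
      + 2 * (Real.exp (c * z) * (f z * f' z))) := (I1.const_mul c).add (I3.const_mul 2)
  have hzero : (∫ z, (c * (Real.exp (c * z) * (f z)^2)
      + 2 * (Real.exp (c * z) * (f z * f' z)))) = 0 :=
    integral_eq_zero_of_hasDerivAt_of_integrable hF IF' I1
  rw [integral_add (I1.const_mul c) (I3.const_mul 2), integral_const_mul, integral_const_mul]
    at hzero
  -- ∫ e f f' = -(c/2) ∫ e f²
  have key : ∫ z, Real.exp (c * z) * (f z * f' z)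
      = -(c/2) * ∫ z, Real.exp (c * z) * (f z)^2 := by linarith
  have hnn : 0 ≤ ∫ z, Real.exp (c * z) * (f' z + c/2 * f z)^2 :=
    integral_nonneg fun z => by positivity
  have hexpand : (fun z => Real.exp (c * z) * (f' z + c/2 * f z)^2)
      = fun z => Real.exp (c * z) * (f' z)^2
        + (c * (Real.exp (c * z) * (f z * f' z)) + c^2/4 * (Real.exp (c * z) * (f z)^2)) := by
    funext z; ring
  have I4 : Integrable (fun z => c * (Real.exp (c * z) * (f z * f' z))
      + c^2/4 * (Real.exp (c * z) * (f z)^2)) := (I3.const_mul c).add (I1.const_mul (c^2/4))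
  rw [hexpand, integral_add I2 I4,
    integral_add (I3.const_mul c) (I1.const_mul (c^2/4)), integral_const_mul,
    integral_const_mul, key] at hnn
  nlinarith [hnn]
/-- If the cross-sectional quadratic form satisfies the eigenvalue bound
`∫_Ω(|∇_y w|² − f_u(0,y)w²)dy ≥ ν₀ ∫_Ω w² dy` for each `z` (definition of `ν₀`), then for
`w ∈ H¹_c(Σ)`, `∫_Σ e^{cz}(|∇w|² − f_u(0,y)w²)dx ≥ (c²/4 + ν₀)∫_Σ e^{cz} w² dx`, where
`|∇w|² = |∇_y w|² + w_z²` (here `G p` stands for `|∇_y w|²(p)` and `q y = f_u(0,y)`). -/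
theorem stmt_7 {Ω : Type*} [MeasurableSpace Ω] (μ : Measure Ω) [SigmaFinite μ]
    (c ν₀ : ℝ) (hc : 0 < c)
    (w wz G : Ω × ℝ → ℝ) (q : Ω → ℝ)
    (hw : Measurable w) (hwz : Measurable wz) (hG : Measurable G) (hq : Measurable q)
    (hGpos : ∀ p, 0 ≤ G p)
    (hderiv : ∀ y z, HasDerivAt (fun z' => w (y, z')) (wz (y, z)) z)
    (hIntG : Integrable (fun p : Ω × ℝ => Real.exp (c * p.2) * G p)
      (μ.prod (volume : Measure ℝ)))
    (hIntq : Integrable (fun p : Ω × ℝ => Real.exp (c * p.2) * (q p.1 * (w p)^2))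
      (μ.prod (volume : Measure ℝ)))
    (hIntz : Integrable (fun p : Ω × ℝ => Real.exp (c * p.2) * (wz p)^2)
      (μ.prod (volume : Measure ℝ)))
    (hIntw : Integrable (fun p : Ω × ℝ => Real.exp (c * p.2) * (w p)^2)
      (μ.prod (volume : Measure ℝ)))
    (hH1y : ∀ y, Integrable (fun z => Real.exp (c * z) * ((w (y, z))^2 + (wz (y, z))^2))
      (volume : Measure ℝ))
    (hν₀ : ∀ z : ℝ, ν₀ * ∫ y, (w (y, z))^2 ∂μ ≤ ∫ y, (G (y, z) - q y * (w (y, z))^2) ∂μ) :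
    (c^2 / 4 + ν₀) * ∫ p : Ω × ℝ, Real.exp (c * p.2) * (w p)^2
        ∂(μ.prod (volume : Measure ℝ)) ≤
      ∫ p : Ω × ℝ, Real.exp (c * p.2) * (G p + (wz p)^2 - q p.1 * (w p)^2)
        ∂(μ.prod (volume : Measure ℝ)) := by

  set ν := μ.prod (volume : Measure ℝ)
  -- the G - q w² part, integrable
  have hIntGq : Integrable (fun p : Ω × ℝ =>
      Real.exp (c * p.2) * (G p - q p.1 * (w p)^2)) ν := by
    have h := hIntG.sub hIntq
    refine h.congr ?_
    filter_upwards with p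
    simp only [Pi.sub_apply]
    ring
  -- Step B : Hardy in z, integrated in y
  have stepB : c^2/4 * (∫ p : Ω × ℝ, Real.exp (c * p.2) * (w p)^2 ∂ν)
      ≤ ∫ p : Ω × ℝ, Real.exp (c * p.2) * (wz p)^2 ∂ν := by
    rw [integral_prod _ hIntw, integral_prod _ hIntz, ← integral_const_mul]
    refine integral_mono (hIntw.integral_prod_left.const_mul _)
      hIntz.integral_prod_left (fun y => ?_)
    exact hardy1d c hc (fun z => w (y, z)) (fun z => wz (y, z))
      (hwz.comp measurable_prodMk_left) (hderiv y) (hH1y y)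
  -- Step C : eigenvalue bound in y, integrated in z
  have stepC : ν₀ * (∫ p : Ω × ℝ, Real.exp (c * p.2) * (w p)^2 ∂ν)
      ≤ ∫ p : Ω × ℝ, Real.exp (c * p.2) * (G p - q p.1 * (w p)^2) ∂ν := by
    rw [integral_prod_symm _ hIntw, integral_prod_symm _ hIntGq, ← integral_const_mul]
    refine integral_mono (hIntw.integral_prod_right.const_mul _)
      hIntGq.integral_prod_right (fun z => ?_)
    simp only
    rw [integral_const_mul, integral_const_mul]
    calc ν₀ * (Real.exp (c * z) * ∫ y, (w (y, z))^2 ∂μ)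
        = Real.exp (c * z) * (ν₀ * ∫ y, (w (y, z))^2 ∂μ) := by ring
      _ ≤ Real.exp (c * z) * ∫ y, (G (y, z) - q y * (w (y, z))^2) ∂μ := by
          exact mul_le_mul_of_nonneg_left (hν₀ z) (Real.exp_nonneg _)
  -- split the RHS
  have hsplit : (fun p : Ω × ℝ => Real.exp (c * p.2) * (G p + (wz p)^2 - q p.1 * (w p)^2))
      = fun p : Ω × ℝ => Real.exp (c * p.2) * (G p - q p.1 * (w p)^2)
        + Real.exp (c * p.2) * (wz p)^2 := by
    funext p; ring
  rw [hsplit, integral_add hIntGq hIntz]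
  linarith
end

section
/- Let u ∈ L^∞(Σ) ∩ L²_c(Σ) with ‖∇u‖_{L^∞} ≤ L and u ≥ 0. Then for every z₀ ∈ ℝ, ‖u‖^{n+2}_{C_b(Ω̄ × [z₀,∞))} ≤ C(n, L, |Ω|) ‖u‖²_{L²_c(Σ)} e^{−c z₀}, i.e., the sup-norm of u on the right half-cylinder is controlled by its weighted L² norm and the weight at z₀. -/
open MeasureTheory Real Set Metric

/-- Interpolation estimate: if `u ≥ 0` on `Σ = Ω × ℝ ⊂ ℝ^{m} × ℝ` is
`L`-Lipschitz and `Ω` (bounded, open, with the measure-density property coming from its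
`C²` boundary), then there is `C > 0` such that for every `z₀` and every point of
`Ω̄ × [z₀,∞)`, `u(p)^{n+2} ≤ C ‖u‖²_{L²_c(Σ)} e^{−c z₀}` with `n = m + 1`. -/
theorem stmt_11 (m : ℕ) (Ω : Set (EuclideanSpace ℝ (Fin m)))
    (hΩopen : IsOpen Ω) (hΩbdd : Bornology.IsBounded Ω) (hΩne : Ω.Nonempty)
    (hdensity : ∃ θ > (0:ℝ), ∃ r₀ > (0:ℝ), ∀ y ∈ Ω, ∀ r : ℝ, 0 < r → r ≤ r₀ →
      θ * r ^ m ≤ (volume (Metric.ball y r ∩ Ω)).toReal)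
    (c L B : ℝ) (hc : 0 < c) (hL : 0 < L) (hB : 0 < B)
    (u : EuclideanSpace ℝ (Fin m) × ℝ → ℝ)
    (hu : Measurable u) (hbdd : ∀ p, |u p| ≤ B)
    (hpos : ∀ p ∈ Ω ×ˢ (univ : Set ℝ), 0 ≤ u p)
    (hLip : LipschitzOnWith (Real.toNNReal L) u (Ω ×ˢ (univ : Set ℝ)))
    (hInt : IntegrableOn (fun p => Real.exp (c * p.2) * (u p)^2)
      (Ω ×ˢ (univ : Set ℝ)) volume) :
    ∃ C > (0:ℝ), ∀ z₀ : ℝ, ∀ p ∈ Ω ×ˢ Ici z₀,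
      (u p) ^ (m + 3) ≤
        C * (∫ q in Ω ×ˢ (univ : Set ℝ), Real.exp (c * q.2) * (u q)^2) *
          Real.exp (-c * z₀) := by
  obtain ⟨θ, hθ, r₀, hr₀, hden⟩ := hdensity
  set a : ℝ := min (1/(2*L)) (r₀/B) with ha_def
  have ha : 0 < a := lt_min (by positivity) (by positivity)
  have hD : 0 < θ * a^(m+1) * Real.exp (-(c*r₀)) :=
    mul_pos (mul_pos hθ (pow_pos ha _)) (Real.exp_pos _)
  refine ⟨2 / (θ * a^(m+1) * Real.exp (-(c*r₀))), div_pos two_pos hD, ?_⟩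
  intro z₀ p hp
  obtain ⟨hy, hz⟩ := hp
  set M := u p with hM
  have hM0 : 0 ≤ M := hpos p ⟨hy, mem_univ _⟩
  have hOmeas : MeasurableSet (Ω ×ˢ (univ : Set ℝ)) :=
    hΩopen.measurableSet.prod MeasurableSet.univ
  have hInonneg : 0 ≤ ∫ q in Ω ×ˢ (univ : Set ℝ), Real.exp (c * q.2) * (u q)^2 :=
    setIntegral_nonneg hOmeas (fun q _ => by positivity)
  rcases eq_or_lt_of_le hM0 with h0 | hMpos
  · rw [← h0, zero_pow (by omega)]
    exact mul_nonneg (mul_nonneg (le_of_lt (div_pos two_pos hD)) hInonneg)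
      (Real.exp_pos _).le
  -- main case : M > 0
  set r : ℝ := min (M/(2*L)) r₀ with hr_def
  have hrpos : 0 < r := lt_min (by positivity) hr₀
  have hrr₀ : r ≤ r₀ := min_le_right _ _
  have hLr : L * r ≤ M/2 := by
    have h1 : r ≤ M/(2*L) := min_le_left _ _
    have := mul_le_mul_of_nonneg_left h1 hL.le
    calc L * r ≤ L * (M/(2*L)) := this
      _ = M/2 := by field_simp
  have hMB : M ≤ B := le_of_abs_le (hbdd p)
  have haM : a * M ≤ r := by
    refine le_min ?_ ?_
    · calc a*M ≤ (1/(2*L))*M := mul_le_mul_of_nonneg_right (min_le_left _ _) hM0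
        _ = M/(2*L) := by ring
    · calc a*M ≤ (r₀/B)*M := mul_le_mul_of_nonneg_right (min_le_right _ _) hM0
        _ ≤ (r₀/B)*B := mul_le_mul_of_nonneg_left hMB (by positivity)
        _ = r₀ := by field_simp
  set S : Set (EuclideanSpace ℝ (Fin m) × ℝ) := (ball p.1 r ∩ Ω) ×ˢ ball p.2 r with hS_def
  have hSsub : S ⊆ Ω ×ˢ (univ : Set ℝ) :=
    Set.prod_mono inter_subset_right (subset_univ _)
  have hSmeas : MeasurableSet S :=
    (measurableSet_ball.inter hΩopen.measurableSet).prod measurableSet_ball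
  have hvolS : volume S = volume (ball p.1 r ∩ Ω) * ENNReal.ofReal (2*r) := by
    rw [hS_def, Measure.volume_eq_prod, Measure.prod_prod, Real.volume_ball]
  have hvolS_ne_top : volume S ≠ ⊤ := by
    rw [hvolS]
    exact ENNReal.mul_ne_top
      (ne_of_lt (lt_of_le_of_lt (measure_mono inter_subset_left) measure_ball_lt_top))
      ENNReal.ofReal_ne_top
  have hvolS_toReal : (volume S).toReal
      = (volume (ball p.1 r ∩ Ω)).toReal * (2*r) := by
    rw [hvolS, ENNReal.toReal_mul, ENNReal.toReal_ofReal (by positivity)]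
  have hlow : ∀ q ∈ S, Real.exp (c*z₀ - c*r₀) * (M/2)^2 ≤ Real.exp (c*q.2) * (u q)^2 := by
    intro q hq
    obtain ⟨⟨hq1b, hq1Ω⟩, hq2⟩ := hq
    have hqmem : q ∈ Ω ×ˢ (univ : Set ℝ) := ⟨hq1Ω, mem_univ _⟩
    have hpmem : p ∈ Ω ×ˢ (univ : Set ℝ) := ⟨hy, mem_univ _⟩
    have hdist : dist q p ≤ r := by
      rw [Prod.dist_eq]
      exact max_le (le_of_lt (mem_ball.mp hq1b)) (le_of_lt (mem_ball.mp hq2))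
    have hd : dist (u q) (u p) ≤ L * r := by
      have h := hLip.dist_le_mul q hqmem p hpmem
      have hcoe : ((Real.toNNReal L : NNReal) : ℝ) = L := Real.coe_toNNReal L hL.le
      rw [hcoe] at h
      exact h.trans (mul_le_mul_of_nonneg_left hdist hL.le)
    have huq : M/2 ≤ u q := by
      rw [Real.dist_eq] at hd
      have habs := abs_le.mp hd
      have : u q - u p ≥ -(L*r) := by linarith [habs.1]
      linarith
    have hz2 : z₀ - r₀ ≤ q.2 := by
      have hb := mem_ball.mp hq2
      rw [Real.dist_eq] at hb
      have habs := abs_le.mp hb.le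
      have hz' : z₀ ≤ p.2 := hz
      linarith [habs.1]
    have h1 : Real.exp (c*z₀ - c*r₀) ≤ Real.exp (c*q.2) := by
      apply Real.exp_le_exp.mpr
      nlinarith
    have h2 : (M/2)^2 ≤ (u q)^2 := by nlinarith
    exact mul_le_mul h1 h2 (by positivity) (Real.exp_pos _).le
  have hint1 : Real.exp (c*z₀ - c*r₀) * (M/2)^2 * (volume S).toReal
      ≤ ∫ q in S, Real.exp (c*q.2) * (u q)^2 :=
    by
      have h := setIntegral_ge_of_const_le_real hSmeas hvolS_ne_top hlow (hInt.mono_set hSsub)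
      simp only [smul_eq_mul, Measure.real] at h
      linarith
  have hint2 : (∫ q in S, Real.exp (c*q.2) * (u q)^2)
      ≤ ∫ q in Ω ×ˢ (univ : Set ℝ), Real.exp (c*q.2) * (u q)^2 :=
    setIntegral_mono_set hInt (Filter.Eventually.of_forall (fun q => by positivity))
      (HasSubset.Subset.eventuallyLE hSsub)
  have hden' : θ * r^m ≤ (volume (ball p.1 r ∩ Ω)).toReal := hden p.1 hy r hrpos hrr₀
  have hvol_lb : θ * (a*M)^m * (2*(a*M)) ≤ (volume S).toReal := by
    rw [hvolS_toReal]
    have h3 : (a*M)^m ≤ r^m := pow_le_pow_left₀ (by positivity) haM m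
    calc θ * (a*M)^m * (2*(a*M))
        ≤ θ * r^m * (2*r) :=
          mul_le_mul (mul_le_mul_of_nonneg_left h3 hθ.le) (by linarith)
            (by positivity) (by positivity)
      _ ≤ (volume (ball p.1 r ∩ Ω)).toReal * (2*r) :=
          mul_le_mul_of_nonneg_right hden' (by positivity)
  have hfinal : Real.exp (c*z₀) * (θ * a^(m+1) * Real.exp (-(c*r₀)) / 2) * M^(m+3)
      ≤ ∫ q in Ω ×ˢ (univ : Set ℝ), Real.exp (c*q.2) * (u q)^2 := by
    have hchain : Real.exp (c*z₀ - c*r₀) * (M/2)^2 * (θ * (a*M)^m * (2*(a*M)))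
        ≤ ∫ q in Ω ×ˢ (univ : Set ℝ), Real.exp (c*q.2) * (u q)^2 := by
      calc Real.exp (c*z₀ - c*r₀) * (M/2)^2 * (θ * (a*M)^m * (2*(a*M)))
          ≤ Real.exp (c*z₀ - c*r₀) * (M/2)^2 * (volume S).toReal :=
            mul_le_mul_of_nonneg_left hvol_lb (by positivity)
        _ ≤ ∫ q in S, Real.exp (c*q.2) * (u q)^2 := hint1
        _ ≤ _ := hint2
    have heq : Real.exp (c*z₀) * (θ * a^(m+1) * Real.exp (-(c*r₀)) / 2) * M^(m+3)
        = Real.exp (c*z₀ - c*r₀) * (M/2)^2 * (θ * (a*M)^m * (2*(a*M))) := by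
      rw [Real.exp_sub, Real.exp_neg, mul_pow]
      have hE : Real.exp (c*r₀) ≠ 0 := (Real.exp_pos _).ne'
      field_simp
      ring
    rw [heq]; exact hchain
  have hEz : 0 < Real.exp (c*z₀) := Real.exp_pos _
  set I := ∫ q in Ω ×ˢ (univ : Set ℝ), Real.exp (c*q.2) * (u q)^2 with hI_def
  have hstep := mul_le_mul_of_nonneg_right
    (mul_le_mul_of_nonneg_left hfinal
      (le_of_lt (div_pos two_pos hD)))
    (inv_nonneg.mpr hEz.le)
  calc M^(m+3)
      = 2 / (θ * a^(m+1) * Real.exp (-(c*r₀)))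
        * (Real.exp (c*z₀) * (θ * a^(m+1) * Real.exp (-(c*r₀)) / 2) * M^(m+3))
        * (Real.exp (c*z₀))⁻¹ := by
        field_simp
    _ ≤ 2 / (θ * a^(m+1) * Real.exp (-(c*r₀))) * I * (Real.exp (c*z₀))⁻¹ := hstep
    _ = 2 / (θ * a^(m+1) * Real.exp (-(c*r₀))) * I * Real.exp (-c*z₀) := by
        have hnm : -c*z₀ = -(c*z₀) := by ring
        rw [hnm, Real.exp_neg (c*z₀)]
end

section
/- Monotonicity of translate distance: for ū ∈ L²_c(Σ) with ū_z ≤ 0 and ū_z not identically zero, the function R ↦ ‖T_R ū − ū‖²_{L²_c(Σ)} is nondecreasing in |R|; in particular ‖T_R ū − ū‖_{L²_c(Σ)} ≥ ‖T_{sgn(R)} ū − ū‖_{L²_c(Σ)} for all |R| ≥ 1. -/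
open MeasureTheory Real Set

/-- Monotonicity of the translate distance: for `ū ∈ L²_c(Σ)` monotone
nonincreasing in `z` (`ū_z ≤ 0`, not identically zero), `R ↦ ‖T_R ū − ū‖²_{L²_c}` is
nondecreasing in `|R|`; in particular for `|R| ≥ 1` it dominates its value at `sgn R`. -/
theorem stmt_17 {Ω : Type*} [MeasurableSpace Ω] (μ : Measure Ω) [SigmaFinite μ]
    (c : ℝ) (hc : 0 < c) (ubar : Ω × ℝ → ℝ) (hubar : Measurable ubar)
    (hmono : ∀ y : Ω, Antitone (fun z => ubar (y, z)))
    (hnontriv : ∃ (y : Ω) (z₁ z₂ : ℝ), z₁ < z₂ ∧ ubar (y, z₂) < ubar (y, z₁))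
    (hL2 : Integrable (fun p : Ω × ℝ => Real.exp (c * p.2) * (ubar p)^2)
      (μ.prod (volume : Measure ℝ)))
    (d : ℝ → ℝ)
    (hd : ∀ R : ℝ, d R = ∫ p : Ω × ℝ,
      Real.exp (c * p.2) * (ubar (p.1, p.2 - R) - ubar p)^2
      ∂(μ.prod (volume : Measure ℝ))) :
    (∀ R₁ R₂ : ℝ, 0 ≤ R₁ → R₁ ≤ R₂ → d R₁ ≤ d R₂) ∧
    (∀ R₁ R₂ : ℝ, R₂ ≤ R₁ → R₁ ≤ 0 → d R₁ ≤ d R₂) ∧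
    (∀ R : ℝ, 1 ≤ |R| → d (Real.sign R) ≤ d R) := by
  -- the translation map is measure preserving
  have hmp : ∀ R : ℝ, MeasurePreserving (fun p : Ω × ℝ => (p.1, p.2 - R))
      (μ.prod volume) (μ.prod volume) := fun R =>
    (MeasurePreserving.id μ).prod (measurePreserving_sub_right volume R)
  have hτmeas : ∀ R : ℝ, Measurable (fun p : Ω × ℝ => ubar (p.1, p.2 - R)) := fun R =>
    hubar.comp (measurable_fst.prodMk (measurable_snd.sub_const R))
  have hint_shift : ∀ R : ℝ, Integrable
      (fun p : Ω × ℝ => Real.exp (c * (p.2 - R)) * (ubar (p.1, p.2 - R))^2)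
      (μ.prod volume) := by
    intro R
    exact ((hmp R).integrable_comp hL2.aestronglyMeasurable).mpr hL2
  have hint_tr : ∀ R : ℝ, Integrable
      (fun p : Ω × ℝ => Real.exp (c * p.2) * (ubar (p.1, p.2 - R))^2)
      (μ.prod volume) := by
    intro R
    refine ((hint_shift R).const_mul (Real.exp (c * R))).congr ?_
    filter_upwards with p
    have h : Real.exp (c * R) * Real.exp (c * (p.2 - R)) = Real.exp (c * p.2) := by
      rw [← Real.exp_add]; congr 1; ring
    rw [← mul_assoc, h]
  have hint : ∀ R : ℝ, Integrable
      (fun p : Ω × ℝ => Real.exp (c * p.2) * (ubar (p.1, p.2 - R) - ubar p)^2)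
      (μ.prod volume) := by
    intro R
    have hG : Integrable (fun p : Ω × ℝ =>
        2 * (Real.exp (c * p.2) * (ubar (p.1, p.2 - R))^2)
        + 2 * (Real.exp (c * p.2) * (ubar p)^2)) (μ.prod volume) :=
      ((hint_tr R).const_mul 2).add (hL2.const_mul 2)
    have hm : Measurable (fun p : Ω × ℝ =>
        Real.exp (c * p.2) * (ubar (p.1, p.2 - R) - ubar p)^2) :=
      (Real.measurable_exp.comp (measurable_const.mul measurable_snd)).mul
        (((hτmeas R).sub hubar).pow_const 2)
    refine hG.mono' hm.aestronglyMeasurable ?_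
    filter_upwards with p
    have he := Real.exp_pos (c * p.2)
    rw [Real.norm_eq_abs, abs_of_nonneg (mul_nonneg he.le (sq_nonneg _))]
    nlinarith [mul_nonneg he.le (sq_nonneg (ubar (p.1, p.2 - R) + ubar p))]
  have key1 : ∀ R₁ R₂ : ℝ, 0 ≤ R₁ → R₁ ≤ R₂ → d R₁ ≤ d R₂ := by
    intro R₁ R₂ h0 h12
    rw [hd R₁, hd R₂]
    refine integral_mono (hint R₁) (hint R₂) ?_
    intro p
    have ha1 : ubar (p.1, p.2) ≤ ubar (p.1, p.2 - R₁) := hmono p.1 (by linarith)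
    have hb21 : ubar (p.1, p.2 - R₁) ≤ ubar (p.1, p.2 - R₂) := hmono p.1 (by linarith)
    have he := Real.exp_pos (c * p.2)
    show Real.exp (c * p.2) * (ubar (p.1, p.2 - R₁) - ubar p)^2
        ≤ Real.exp (c * p.2) * (ubar (p.1, p.2 - R₂) - ubar p)^2
    have hup : ubar p = ubar (p.1, p.2) := rfl
    rw [hup]
    nlinarith [mul_nonneg (sub_nonneg.2 hb21) (sub_nonneg.2 ha1),
      mul_nonneg (sub_nonneg.2 hb21) (sub_nonneg.2 (ha1.trans hb21))]
  have key2 : ∀ R₁ R₂ : ℝ, R₂ ≤ R₁ → R₁ ≤ 0 → d R₁ ≤ d R₂ := by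
    intro R₁ R₂ h21 h10
    rw [hd R₁, hd R₂]
    refine integral_mono (hint R₁) (hint R₂) ?_
    intro p
    have ha1 : ubar (p.1, p.2 - R₁) ≤ ubar (p.1, p.2) := hmono p.1 (by linarith)
    have hb12 : ubar (p.1, p.2 - R₂) ≤ ubar (p.1, p.2 - R₁) := hmono p.1 (by linarith)
    have he := Real.exp_pos (c * p.2)
    show Real.exp (c * p.2) * (ubar (p.1, p.2 - R₁) - ubar p)^2
        ≤ Real.exp (c * p.2) * (ubar (p.1, p.2 - R₂) - ubar p)^2
    have hup : ubar p = ubar (p.1, p.2) := rfl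
    rw [hup]
    nlinarith [mul_nonneg (sub_nonneg.2 hb12) (sub_nonneg.2 ha1),
      mul_nonneg (sub_nonneg.2 hb12) (sub_nonneg.2 (hb12.trans ha1))]
  refine ⟨key1, key2, ?_⟩
  intro R hR
  rcases lt_trichotomy R 0 with h | h | h
  · rw [Real.sign_of_neg h]
    have : R ≤ -1 := by
      have := abs_of_neg h ▸ hR; linarith
    exact key2 (-1) R this (by linarith)
  · simp [h] at hR; linarith
  · rw [Real.sign_of_pos h]
    have : 1 ≤ R := by
      have := abs_of_pos h ▸ hR; linarith
    exact key1 1 R one_pos.le this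
end
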